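/- Let G be a directed graph, P = p_1...p_ℓ a simple directed path in G, u and v vertices, a ⪯ b two vertices of P, and x a vertex of P with x ∉ V(P[a,b]). Suppose Q = L·R is a u→v path in G−x whose first vertex on P, enter(Q), lies on P[a,b], and L is a satellite u→enter(Q) path. Let u' be the earliest vertex of P[a,b] reachable in G−x from f, where f is the earliest vertex of P[a,b] reachable from u by a satellite path in G. Then (i) Q does not pass through any vertex of P[a,b] earlier than u', and (ii) there exists a u→v walk Q' = L'·R in G−x with enter(Q') ∈ V(P[a,b]), u' ∈ V(L'), and leave(Q') = leave(Q). -/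

import Mathlib

/-- A (directed) walk in digraph `G` from `a` to `b`, given as its list of vertices. -/
def DiWalk {V : Type*} (G : V → V → Prop) (a b : V) (l : List V) : Prop :=
  List.Chain' G l ∧ l.head? = some a ∧ l.getLast? = some b

/-- The graph `G` with the vertex `x` removed (induced subgraph `G − x`). -/
def Del {V : Type*} (G : V → V → Prop) (x : V) : V → V → Prop :=
  fun a b => G a b ∧ a ≠ x ∧ b ≠ x

/-- `Sat G p a b`: there is a satellite walk (internal vertices avoiding `p`)
from `a` to `b` in `G`. -/
def Sat {V : Type*} (G : V → V → Prop) (p : List V) (a b : V) : Prop :=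
  ∃ l, DiWalk G a b l ∧ ∀ w ∈ l.tail.dropLast, w ∉ p

namespace Stmt14

variable {V : Type*} {R : V → V → Prop} {x a b c w : V} {l l1 l2 : List V}

lemma mem_tail_dropLast (h : w ∈ l.tail.dropLast) : w ∈ l.dropLast := by
  cases l with
  | nil => simp at h
  | cons a t =>
    cases t with
    | nil => simp at h
    | cons b t' =>
      rw [List.dropLast_cons₂]
      exact List.mem_cons_of_mem _ h

lemma chain'_del {G : V → V → Prop} (h : List.Chain' G l) (hx : ∀ w ∈ l, w ≠ x) :
    List.Chain' (Del G x) l := by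
  induction l with
  | nil => exact List.isChain_nil
  | cons a t ih =>
    cases t with
    | nil => exact List.isChain_singleton _
    | cons b t' =>
      unfold List.Chain' at h ⊢; rw [List.isChain_cons_cons] at h ⊢
      exact ⟨⟨h.1, hx a (by simp), hx b (by simp)⟩,
        ih h.2 fun w hw => hx w (List.mem_cons_of_mem _ hw)⟩

lemma dw_ne_nil (h : DiWalk R a b l) : l ≠ [] := by
  rintro rfl; simp [DiWalk] at h

lemma dw_eq_dropLast (h : DiWalk R a b l) : l = l.dropLast ++ [b] :=
  (List.dropLast_append_getLast? b h.2.2).symm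

lemma dw_eq_cons (h : DiWalk R a b l) : l = a :: l.tail :=
  List.eq_cons_of_mem_head? h.2.1

lemma dw_last_mem (h : DiWalk R a b l) : b ∈ l := by
  rw [dw_eq_dropLast h]; simp

lemma dw_head_mem (h : DiWalk R a b l) : a ∈ l := by
  rw [dw_eq_cons h]; simp

lemma diwalk_append (h1 : DiWalk R a b l1) (h2 : DiWalk R b c l2) :
    DiWalk R a c (l1 ++ l2.tail) ∧ l1 ++ l2.tail = l1.dropLast ++ l2 := by
  have hc2 : l2 = b :: l2.tail := dw_eq_cons h2
  have hd1 : l1.dropLast ++ [b] = l1 := List.dropLast_append_getLast? b h1.2.2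
  have he : l1 ++ l2.tail = l1.dropLast ++ l2 := by
    conv_lhs => rw [← hd1]
    conv_rhs => rw [hc2]
    simp
  have hlink : ∀ z ∈ l1.dropLast.getLast?, R z b := by
    have hch := h1.1
    rw [← hd1] at hch; unfold List.Chain' at hch; rw [List.isChain_append] at hch
    intro z hz
    exact hch.2.2 z hz b rfl
  refine ⟨⟨?_, ?_, ?_⟩, he⟩
  · rw [he]; unfold List.Chain'; rw [List.isChain_append]
    refine ⟨h1.1.prefix (List.dropLast_prefix l1), h2.1, ?_⟩
    intro z hz y hy
    have hyb : y = b := by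
      rw [h2.2.1] at hy; exact (Option.some_inj.1 hy).symm
    subst hyb
    exact hlink z hz
  · rw [List.head?_append, h1.2.1]
    rfl
  · rw [List.getLast?_append]
    cases ht : l2.tail with
    | nil =>
      have hbc : b = c := by
        have h22 := h2.2.2
        rw [hc2, ht] at h22
        simpa using h22
      subst hbc
      simpa [ht] using h1.2.2
    | cons d t' =>
      have : (d :: t').getLast? = some c := by
        have h22 := h2.2.2
        rw [hc2, ht, List.getLast?_cons_cons] at h22
        exact h22
      simp [this]

lemma reach_head (h : List.Chain' R l) (ha : l.head? = some a) (hw : w ∈ l) :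
    Relation.ReflTransGen R a w := by
  induction l generalizing a with
  | nil => simp at hw
  | cons c t ih =>
    obtain rfl : c = a := by simpa using ha
    rcases List.mem_cons.1 hw with rfl | hw'
    · exact .refl
    · cases t with
      | nil => simp at hw'
      | cons d t' =>
        unfold List.Chain' at h; rw [List.isChain_cons_cons] at h
        exact Relation.ReflTransGen.head h.1 (ih h.2 rfl hw')

lemma diwalk_reach (h : DiWalk R a b l) : Relation.ReflTransGen R a b :=
  reach_head h.1 h.2.1 (dw_last_mem h)

lemma rtg_diwalk (h : Relation.ReflTransGen R a b) : ∃ l, DiWalk R a b l := by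
  induction h with
  | refl => exact ⟨[a], by simp [DiWalk, List.Chain', List.isChain_singleton]⟩
  | @tail b c hab hbc ih =>
    obtain ⟨l, hl⟩ := ih
    refine ⟨l ++ [c], ⟨?_, ?_, by simp⟩⟩
    · unfold List.Chain'; rw [List.isChain_append]
      refine ⟨hl.1, by simp, ?_⟩
      intro z hz y hy
      have : z = b := by rw [hl.2.2] at hz; exact (by simpa using hz : b = z).symm
      have : y = c := by exact (by simpa using hy : c = y).symm
      subst_vars
      exact hbc
    · rw [List.head?_append]
      simp [hl.2.1]

lemma mem_of_getLast?' {l : List V} {b : V} (h : l.getLast? = some b) : b ∈ l := by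
  rw [← List.dropLast_append_getLast? b h]
  simp

lemma subpath_diwalk {G : V → V → Prop} {p : List V} (hchain : List.Chain' G p)
    (i j : Fin p.length) (hij : (i : ℕ) ≤ j) :
    ∃ l, DiWalk G (p.get i) (p.get j) l ∧
      ∀ w ∈ l, ∃ m : Fin p.length, (i : ℕ) ≤ m ∧ (m : ℕ) ≤ j ∧ w = p.get m := by
  set l := (p.drop (i : ℕ)).take ((j : ℕ) - i + 1) with hl
  have hlen : l.length = (j : ℕ) - i + 1 := by
    simp [hl]
    omega
  have hget : ∀ (t : ℕ) (ht : t < l.length), l[t] = p[(i : ℕ) + t]'(by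
      have := j.isLt; omega) := by
    intro t ht
    simp only [hl, List.getElem_take, List.getElem_drop]
  refine ⟨l, ⟨?_, ?_, ?_⟩, ?_⟩
  · exact hchain.infix ((List.take_prefix _ _).isInfix.trans (List.drop_suffix _ _).isInfix)
  · rw [List.head?_eq_getElem?, List.getElem?_eq_getElem (by omega), hget 0 (by omega)]
    simp [List.get_eq_getElem]
  · have h1 : l.getLast? = some (l[(j : ℕ) - i]'(by omega)) := by
      rw [List.getLast?_eq_getElem?]
      conv_lhs => rw [hlen, Nat.add_sub_cancel]
      rw [List.getElem?_eq_getElem (by omega)]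
    rw [h1, hget _ (by omega)]
    simp only [List.get_eq_getElem,
      show (i : ℕ) + ((j : ℕ) - i) = (j : ℕ) from by omega]
  · intro w hw
    obtain ⟨t, ht, rfl⟩ := List.mem_iff_getElem.1 hw
    refine ⟨⟨(i : ℕ) + t, by have := j.isLt; omega⟩, by simp, by simp; omega, ?_⟩
    rw [hget t ht]
    simp [List.get_eq_getElem]

end Stmt14


open Stmt14

/-- with `a = p.get ia ⪯ b = p.get ib` on `P`, `x = p.get kx ∉ P[a,b]`,
`Q = L·R` a `u → v` walk in `G − x` whose first vertex `enter(Q) = p.get ie` on `P`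
lies on `P[a,b]` (`L` being a satellite `u → enter(Q)` walk), `f = p.get jf` the
earliest vertex of `P[a,b]` reachable from `u` by a satellite path in `G`, and
`u' = p.get ju` the earliest vertex of `P[a,b]` reachable from `f` in `G − x`:
(i) `Q` passes through no vertex of `P[a,b]` earlier than `u'`; and
(ii) there is a `u → v` walk `Q' = L'·R` in `G − x` with `enter(Q') ∈ P[a,b]`,
`u' ∈ L'`, and `leave(Q') = leave(Q)`. -/
theorem stmt_14 {V : Type*} (G : V → V → Prop) (p : List V)
    (hchain : List.Chain' G p) (hnodup : p.Nodup) (u v : V)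
    (ia ib kx : Fin p.length) (hab : (ia : ℕ) ≤ (ib : ℕ))
    (hx : (kx : ℕ) < (ia : ℕ) ∨ (ib : ℕ) < (kx : ℕ))
    (ie : Fin p.length) (hie : (ia : ℕ) ≤ (ie : ℕ) ∧ (ie : ℕ) ≤ (ib : ℕ))
    (lL lR : List V)
    (hL : DiWalk (Del G (p.get kx)) u (p.get ie) lL)
    (hLsat : ∀ w ∈ lL.dropLast, w ∉ p)
    (hR : DiWalk (Del G (p.get kx)) (p.get ie) v lR)
    (jf : Fin p.length)
    (hjf : (ia : ℕ) ≤ (jf : ℕ) ∧ (jf : ℕ) ≤ (ib : ℕ) ∧ Sat G p u (p.get jf) ∧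
      ∀ m : Fin p.length, (ia : ℕ) ≤ (m : ℕ) → (m : ℕ) ≤ (ib : ℕ) →
        Sat G p u (p.get m) → (jf : ℕ) ≤ (m : ℕ))
    (ju : Fin p.length)
    (hju : (ia : ℕ) ≤ (ju : ℕ) ∧ (ju : ℕ) ≤ (ib : ℕ) ∧
      Relation.ReflTransGen (Del G (p.get kx)) (p.get jf) (p.get ju) ∧
      ∀ m : Fin p.length, (ia : ℕ) ≤ (m : ℕ) → (m : ℕ) ≤ (ib : ℕ) →
        Relation.ReflTransGen (Del G (p.get kx)) (p.get jf) (p.get m) →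
        (ju : ℕ) ≤ (m : ℕ))
    (ilv : Fin p.length)
    (hleave : ∃ s1 s2, lL ++ lR.tail = s1 ++ (p.get ilv) :: s2 ∧ ∀ w ∈ s2, w ∉ p) :
    ((∀ m : Fin p.length, (ia : ℕ) ≤ (m : ℕ) → (m : ℕ) ≤ (ib : ℕ) →
        p.get m ∈ lL ++ lR.tail → (ju : ℕ) ≤ (m : ℕ)) ∧
      ∃ lL' : List V,
        DiWalk (Del G (p.get kx)) u (p.get ie) lL' ∧ p.get ju ∈ lL' ∧
        (∃ (ie' : Fin p.length) (r1 r2 : List V),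
          lL' ++ lR.tail = r1 ++ (p.get ie') :: r2 ∧ (∀ w ∈ r1, w ∉ p) ∧
          (ia : ℕ) ≤ (ie' : ℕ) ∧ (ie' : ℕ) ≤ (ib : ℕ)) ∧
        (∃ t1 t2 : List V,
          lL' ++ lR.tail = t1 ++ (p.get ilv) :: t2 ∧ ∀ w ∈ t2, w ∉ p)) := by
  have hgm : ∀ m : Fin p.length, p.get m ∈ p := fun m => by
    rw [List.get_eq_getElem]; exact List.getElem_mem _
  have ne_x : ∀ m : Fin p.length, (ia : ℕ) ≤ m → (m : ℕ) ≤ ib → p.get m ≠ p.get kx := by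
    intro m h1 h2 he
    have := congrArg Fin.val ((hnodup.get_inj_iff).1 he)
    omega
  have subDel : ∀ i j : Fin p.length, (ia : ℕ) ≤ i → (j : ℕ) ≤ ib → (i : ℕ) ≤ j →
      ∃ l, DiWalk (Del G (p.get kx)) (p.get i) (p.get j) l := by
    intro i j h1 h2 hij
    obtain ⟨l, hw, hmem⟩ := subpath_diwalk hchain i j hij
    refine ⟨l, chain'_del hw.1 ?_, hw.2.1, hw.2.2⟩
    intro w hw'
    obtain ⟨m, hm1, hm2, rfl⟩ := hmem w hw'
    exact ne_x m (le_trans h1 hm1) (le_trans hm2 h2)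
  have hune : u ≠ p.get kx := by
    obtain ⟨hch, hh, hlast⟩ := id hL
    cases lL with
    | nil => simp at hh
    | cons a t =>
      obtain rfl : a = u := by simpa using hh
      cases t with
      | nil =>
        have hue : a = p.get ie := by simpa using hlast
        rw [hue]; exact ne_x ie hie.1 hie.2
      | cons d t' => exact (List.isChain_cons_cons.1 (show List.IsChain _ (a :: d :: t') from hch)).1.2.1
  have hSatE : Sat G p u (p.get ie) :=
    ⟨lL, ⟨hL.1.imp (fun _ _ h => h.1), hL.2.1, hL.2.2⟩,
      fun w hw => hLsat w (mem_tail_dropLast hw)⟩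
  have hjf_le_ie : (jf : ℕ) ≤ ie := hjf.2.2.2 ie hie.1 hie.2 hSatE
  obtain ⟨lFE, hFE⟩ := subDel jf ie hjf.1 hie.2 hjf_le_ie
  have hreach_fe := diwalk_reach hFE
  have hju_le_ie : (ju : ℕ) ≤ ie := hju.2.2.2 ie hie.1 hie.2 hreach_fe
  constructor
  · -- part (i)
    intro m h1 h2 hm
    rcases List.mem_append.1 hm with hm | hm
    · rw [← List.dropLast_append_getLast? _ hL.2.2] at hm
      rcases List.mem_append.1 hm with hm | hm
      · exact absurd (hgm m) (hLsat _ hm)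
      · have hmie : p.get m = p.get ie := by simpa using hm
        have : m = ie := (hnodup.get_inj_iff).1 hmie
        rw [this]
        exact hju_le_ie
    · have hmem : p.get m ∈ lR := List.mem_of_mem_tail hm
      have hr : Relation.ReflTransGen (Del G (p.get kx)) (p.get ie) (p.get m) :=
        reach_head hR.1 hR.2.1 hmem
      exact hju.2.2.2 m h1 h2 (hreach_fe.trans hr)
  · -- part (ii)
    obtain ⟨lS, hSwalk, hSsat⟩ := hjf.2.2.1
    have hSx : ∀ w ∈ lS, w ≠ p.get kx := by
      intro w hw
      obtain ⟨hch, hh, hlast⟩ := id hSwalk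
      cases lS with
      | nil => simp at hh
      | cons a t =>
        obtain rfl : a = u := by simpa using hh
        rcases List.mem_cons.1 hw with rfl | hw'
        · exact hune
        · cases t with
          | nil => simp at hw'
          | cons d t' =>
            have hlast' : (d :: t').getLast? = some (p.get jf) := by
              rw [List.getLast?_cons_cons] at hlast
              exact hlast
            rw [← List.dropLast_append_getLast? _ hlast'] at hw'
            rcases List.mem_append.1 hw' with hw'' | hw''
            · intro he
              exact hSsat w hw'' (he ▸ hgm kx)
            · have : w = p.get jf := by simpa using hw''
              rw [this]
              exact ne_x jf hjf.1 hjf.2.1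
    have hSDel : DiWalk (Del G (p.get kx)) u (p.get jf) lS :=
      ⟨chain'_del hSwalk.1 hSx, hSwalk.2.1, hSwalk.2.2⟩
    obtain ⟨lW, hW⟩ := rtg_diwalk hju.2.2.1
    obtain ⟨lP, hP⟩ := subDel ju ie hju.1 hie.2 hju_le_ie
    obtain ⟨hSW, hSWeq⟩ := diwalk_append hSDel hW
    obtain ⟨hLL, hLLeq⟩ := diwalk_append hSW hP
    refine ⟨(lS ++ lW.tail) ++ lP.tail, hLL, ?_, ?_, ?_⟩
    · rw [hLLeq]
      exact List.mem_append_right _ (dw_head_mem hP)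
    · -- enter decomposition
      by_cases hup : u ∈ p
      · have hue : u = p.get ie := by
          obtain ⟨hch, hh, hlast⟩ := id hL
          cases lL with
          | nil => simp at hh
          | cons a t =>
            obtain rfl : a = u := by simpa using hh
            cases t with
            | nil => simpa using hlast
            | cons d t' =>
              exact absurd hup (hLsat _ (by rw [List.dropLast_cons₂]; simp))
        refine ⟨ie, [], ((lS ++ lW.tail) ++ lP.tail).tail ++ lR.tail, ?_, by simp,
          hie.1, hie.2⟩
        conv_lhs => rw [dw_eq_cons hLL]
        rw [hue]
        simp
      · refine ⟨jf, lS.dropLast, lW.tail ++ lP.tail ++ lR.tail, ?_, ?_, hjf.1, hjf.2.1⟩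
        · have hdS : lS = lS.dropLast ++ [p.get jf] :=
            (List.dropLast_append_getLast? _ hSwalk.2.2).symm
          conv_lhs => rw [hdS]
          simp [List.append_assoc]
        · intro w hw
          obtain ⟨hch, hh, hlast⟩ := id hSwalk
          cases lS with
          | nil => simp at hw
          | cons a t =>
            obtain rfl : a = u := by simpa using hh
            cases t with
            | nil => simp at hw
            | cons d t' =>
              rw [List.dropLast_cons₂] at hw
              rcases List.mem_cons.1 hw with rfl | hw'
              · exact hup
              · exact hSsat w hw'
    · -- leave decomposition
      obtain ⟨s1, s2, heq, hs2⟩ := hleave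
      rcases List.append_eq_append_iff.1 heq with ⟨a', ha1, ha2⟩ | ⟨c', hc1, hc2⟩
      · refine ⟨((lS ++ lW.tail) ++ lP.tail) ++ a', s2, ?_, hs2⟩
        rw [List.append_assoc, ha2]
        simp
      · cases c' with
        | nil =>
          rw [List.nil_append] at hc2
          refine ⟨(lS ++ lW.tail) ++ lP.tail, s2, ?_, hs2⟩
          rw [← hc2]
        | cons w c'' =>
          obtain ⟨rfl, hs2eq⟩ : p.get ilv = w ∧ s2 = c'' ++ lR.tail := by
            have := hc2
            simp at this
            exact ⟨this.1, this.2⟩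
          cases c'' with
          | cons z c3 =>
            exfalso
            have hgl : (z :: c3).getLast? = some (p.get ie) := by
              have := hL.2.2
              rw [hc1, List.getLast?_append, List.getLast?_cons_cons] at this
              simpa using this
            have hmem : p.get ie ∈ z :: c3 := mem_of_getLast?' hgl
            have : p.get ie ∈ s2 := by
              rw [hs2eq]
              exact List.mem_append_left _ hmem
            exact hs2 _ this (hgm ie)
          | nil =>
            have hwe : p.get ilv = p.get ie := by
              have := hL.2.2
              rw [hc1, List.getLast?_append] at this
              simpa using this
            refine ⟨((lS ++ lW.tail) ++ lP.tail).dropLast, lR.tail, ?_, ?_⟩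
            · conv_lhs => rw [dw_eq_dropLast hLL]
              rw [hwe]
              simp
            · intro y hy
              apply hs2
              rw [hs2eq]
              simpa using hy
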